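/- For all real ζ with 0 < ζ < 1, ζ·F(-1/2, 1, 5/2; -ζ²) = (3/8)·((ζ - ζ^{-1}) + (ζ + ζ^{-1})²·arctan ζ), where F is the Gauss hypergeometric series F(α,β,γ;z) = ∑_{n≥0} z^n ∏_{j=0}^{n-1} (α+j)(β+j)/((1+j)(γ+j)). -/

import Mathlib

/-- The coefficients of the Gauss hypergeometric series `F(-1/2, 1, 5/2; z)`. -/
noncomputable def stmt13c (n : ℕ) : ℝ :=
  ∏ j ∈ Finset.range n,
    ((-1 / 2 + (j : ℝ)) * (1 + (j : ℝ))) / ((1 + (j : ℝ)) * (5 / 2 + (j : ℝ)))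

lemma stmt13c_ne (n : ℕ) : (2 * (n : ℝ) - 1) ≠ 0 := by
  rcases n with _ | m
  · norm_num
  · push_cast; nlinarith [Nat.cast_nonneg (α := ℝ) m]

lemma stmt13c_eq (n : ℕ) :
    stmt13c n = -3 / ((2 * (n : ℝ) - 1) * (2 * n + 1) * (2 * n + 3)) := by
  induction n with
  | zero => simp [stmt13c]
  | succ m ih =>
      rw [stmt13c, Finset.prod_range_succ, ← stmt13c, ih]
      have h0 : (2 * (m : ℝ) - 1) ≠ 0 := stmt13c_ne m
      have h1 : (2 * (m : ℝ) + 1) ≠ 0 := by positivity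
      have h2 : (2 * (m : ℝ) + 3) ≠ 0 := by positivity
      have h3 : (2 * (m : ℝ) + 5) ≠ 0 := by positivity
      have h4 : (1 + (m : ℝ)) ≠ 0 := by positivity
      have h5 : (5 / 2 + (m : ℝ)) ≠ 0 := by positivity
      have hm : (0 : ℝ) ≤ (m : ℝ) := Nat.cast_nonneg m
      have e1 : (0 : ℝ) < 2 * ((m : ℝ) + 1) - 1 := by nlinarith
      have e2 : (0 : ℝ) < 2 * ((m : ℝ) + 1) + 1 := by nlinarith
      have e3 : (0 : ℝ) < 2 * ((m : ℝ) + 1) + 3 := by nlinarith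
      have hp := mul_pos (mul_pos e1 e2) e3
      have hq : ((2 * (m : ℝ) - 1) * (2 * (m : ℝ) + 1) * (2 * (m : ℝ) + 3)) *
          ((1 + (m : ℝ)) * (5 / 2 + (m : ℝ))) ≠ 0 :=
        mul_ne_zero (mul_ne_zero (mul_ne_zero h0 h1) h2) (mul_ne_zero h4 h5)
      push_cast
      rw [div_mul_div_comm, div_eq_div_iff hq hp.ne']
      ring

/-- For `0 < ζ < 1`,
`ζ F(-1/2,1,5/2; -ζ²) = (3/8)((ζ - ζ⁻¹) + (ζ + ζ⁻¹)² arctan ζ)`. -/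
theorem stmt_13 :
    ∀ ζ : ℝ, 0 < ζ → ζ < 1 →
      ζ * ∑' n : ℕ, stmt13c n * (-ζ ^ 2) ^ n
        = (3 / 8) * ((ζ - ζ⁻¹) + (ζ + ζ⁻¹) ^ 2 * Real.arctan ζ) := by
  intro ζ hζ0 hζ1
  have hζ : ζ ≠ 0 := ne_of_gt hζ0
  have hnorm : ‖ζ‖ < 1 := by rw [Real.norm_eq_abs, abs_of_pos hζ0]; exact hζ1
  set A := Real.arctan ζ with hA
  set F : ℕ → ℝ := fun n => (-1) ^ n * ζ ^ (2 * n + 1) / (2 * (n : ℝ) + 1) with hF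
  set G : ℕ → ℝ := fun n => (-1) ^ n * ζ ^ (2 * n + 1) / (2 * (n : ℝ) - 1) with hG
  set D : ℕ → ℝ := fun n => (-1) ^ n * ζ ^ (2 * n + 1) / (2 * (n : ℝ) + 3) with hD
  have ha0 : HasSum (fun n : ℕ => (-1) ^ n * ζ ^ (2 * n + 1) / ((2 * n + 1 : ℕ) : ℝ)) A :=
    Real.hasSum_arctan hnorm
  have ha : HasSum F A := by
    convert ha0 using 2 with n
    simp only [hF]
    push_cast
    ring
  -- series with denominator (2n-1)
  have hb : HasSum G (-ζ ^ 2 * A + -ζ) := by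
    have h1 := ha.mul_left (-ζ ^ 2)
    have heq : (fun n : ℕ => -ζ ^ 2 * F n) = fun n : ℕ => G (n + 1) := by
      funext n
      simp only [hF, hG]
      have : (2 * ((n + 1 : ℕ) : ℝ) - 1) = 2 * (n : ℝ) + 1 := by push_cast; ring
      push_cast
      rw [show 2 * ((n : ℝ) + 1) - 1 = 2 * (n : ℝ) + 1 by ring]
      ring
    rw [heq] at h1
    have h2 := (hasSum_nat_add_iff (f := G) 1).mp h1
    convert h2 using 1
    · rfl
    simp [hG]
    ring
  -- shifted arctan series
  have hashift : HasSum (fun n : ℕ => F (n + 1)) (A - ζ) := by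
    refine (hasSum_nat_add_iff 1).mpr ?_
    convert ha using 1
    · rfl
    simp [hF]
  -- series with denominator (2n+3)
  have hd : HasSum D (-(ζ ^ 2)⁻¹ * (A - ζ)) := by
    have h1 := hashift.mul_left (-(ζ ^ 2)⁻¹)
    convert h1 using 2 with n
    · rfl
    simp only [hF, hD]
    push_cast
    rw [show 2 * ((n : ℝ) + 1) + 1 = 2 * (n : ℝ) + 3 by ring]
    rw [show 2 * (n + 1) + 1 = (2 * n + 1) + 2 by ring, pow_add, pow_succ]
    field_simp
    ring
  -- combine
  have hcomb := ((hb.mul_left (-3 / 8)).add (ha.mul_left (3 / 4))).add (hd.mul_left (-3 / 8))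
  have hcomb' : HasSum (fun n : ℕ => ζ * (stmt13c n * (-ζ ^ 2) ^ n))
      (-3 / 8 * (-ζ ^ 2 * A + -ζ) + 3 / 4 * A + -3 / 8 * (-(ζ ^ 2)⁻¹ * (A - ζ))) := by
    convert hcomb using 2 with n
    · rfl
    rw [stmt13c_eq]
    simp only [hF, hG, hD]
    have h0 : (2 * (n : ℝ) - 1) ≠ 0 := stmt13c_ne n
    have h1 : (2 * (n : ℝ) + 1) ≠ 0 := by positivity
    have h2 : (2 * (n : ℝ) + 3) ≠ 0 := by positivity
    have hpow : (-ζ ^ 2) ^ n = (-1) ^ n * ζ ^ (2 * n) := by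
      rw [neg_pow, pow_mul]
    rw [hpow, pow_add, pow_mul]
    field_simp
    ring
  have hsum : HasSum (fun n : ℕ => stmt13c n * (-ζ ^ 2) ^ n)
      (ζ⁻¹ * (-3 / 8 * (-ζ ^ 2 * A + -ζ) + 3 / 4 * A + -3 / 8 * (-(ζ ^ 2)⁻¹ * (A - ζ)))) := by
    have := hcomb'.mul_left ζ⁻¹
    convert this using 2 with n
    · rfl
    field_simp
  rw [hsum.tsum_eq]
  field_simp
  ring
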